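/- Let K be an abstract simplicial complex on [m]. The ℤ-linear map η : ⊕_{ω⊆[m]} C̃^*(K_ω) → C^*((D^1,S^0)^K) sending the dual simplex σ*_ω ∈ C̃^*(K_ω) to the word u^σ t^{ω∖σ} is a bijective cochain map that raises degrees by one; that is, η is an isomorphism of cochain complexes after shifting degrees up by one. -/

import Mathlib

structure ASC (m : ℕ) where
  faces : Set (Finset (Fin m))
  empty_mem : ∅ ∈ faces
  down_closed : ∀ {σ τ : Finset (Fin m)}, σ ∈ faces → τ ⊆ σ → τ ∈ faces

def csg {m : ℕ} (i : Fin m) (σ : Finset (Fin m)) : ℤ :=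
  (-1) ^ (σ.filter (fun j => j < i)).card

variable {m : ℕ}

/-- Index of the cellular basis words `u^σ t^τ`. -/
def DSIdx (K : ASC m) : Type :=
  {p : Finset (Fin m) × Finset (Fin m) // p.1 ∈ K.faces ∧ Disjoint p.1 p.2}

/-- cellular cochains of the real moment-angle complex -/
abbrev DSCochain (K : ASC m) : Type := DSIdx K →₀ ℤ

open Classical in
/-- the coboundary `d(u^σ t^τ) = ∑_{i ∈ τ, σ∪{i} ∈ K} (-1)^{(i,σ)} u^{σ∪{i}} t^{τ∖{i}}` -/
noncomputable def DScob (K : ASC m) : DSCochain K →ₗ[ℤ] DSCochain K :=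
  Finsupp.lift (DSCochain K) ℤ (DSIdx K) fun b =>
    ∑ i ∈ b.1.2,
      if h : insert i b.1.1 ∈ K.faces then
        csg i b.1.1 •
          Finsupp.single (⟨(insert i b.1.1, b.1.2.erase i),
            ⟨h, by
              refine Finset.disjoint_left.2 fun a ha hb => ?_
              rcases Finset.mem_insert.1 ha with h' | h'
              · exact (Finset.mem_erase.1 hb).1 h'
              · exact (Finset.disjoint_left.1 b.2.2 h') (Finset.mem_of_mem_erase hb)⟩⟩ :
              DSIdx K) (1 : ℤ)
      else 0

/-- cohomological degree of `u^σ t^τ` is `card σ`. -/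
def DSdeg {K : ASC m} (b : DSIdx K) : ℤ := b.1.1.card

/-- index of basis of `⊕_ω C̃^*(K_ω)` : pairs `(ω, σ)` with `σ ∈ K_ω`. -/
def PairIdx (K : ASC m) : Type :=
  {p : Finset (Fin m) × Finset (Fin m) // p.2 ⊆ p.1 ∧ p.2 ∈ K.faces}

abbrev PairCochain (K : ASC m) : Type := PairIdx K →₀ ℤ

open Classical in
/-- coboundary of the direct sum of augmented cochain complexes of full subcomplexes:
`d(σ*_ω) = ∑_{i ∈ ω∖σ, σ∪{i} ∈ K} (-1)^{(i,σ)} (σ∪{i})*_ω` -/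
noncomputable def Paircob (K : ASC m) : PairCochain K →ₗ[ℤ] PairCochain K :=
  Finsupp.lift (PairCochain K) ℤ (PairIdx K) fun b =>
    ∑ i ∈ (b.1.1 \ b.1.2).attach,
      if h : insert i.1 b.1.2 ∈ K.faces then
        csg i.1 b.1.2 •
          Finsupp.single (⟨(b.1.1, insert i.1 b.1.2),
            ⟨Finset.insert_subset (Finset.mem_sdiff.1 i.2).1 b.2.1, h⟩⟩ :
            PairIdx K) (1 : ℤ)
      else 0

/-- degree of the dual simplex `σ*_ω` is `card σ - 1`. -/
def Pairdeg {K : ASC m} (b : PairIdx K) : ℤ := (b.1.2.card : ℤ) - 1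

/-- the map `η` sending `σ*_ω ∈ C̃^*(K_ω)` to the word `u^σ t^{ω∖σ}` -/
noncomputable def etaMap (K : ASC m) : PairCochain K →ₗ[ℤ] DSCochain K :=
  Finsupp.lift (DSCochain K) ℤ (PairIdx K) fun b =>
    Finsupp.single (⟨(b.1.2, b.1.1 \ b.1.2), ⟨b.2.2, Finset.disjoint_sdiff⟩⟩ : DSIdx K) (1 : ℤ)

open Classical in
noncomputable def partSub {ι α : Type*} (f : ι → α) (a : α) : Submodule ℤ (ι →₀ ℤ) where
  carrier := {x | ∀ b ∈ x.support, f b = a}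
  add_mem' := by
    intro x y hx hy b hb
    rcases Finset.mem_union.1 (Finsupp.support_add hb) with h | h
    · exact hx b h
    · exact hy b h
  zero_mem' := by intro b hb; simp at hb
  smul_mem' := by
    intro c x hx b hb
    exact hx b (Finsupp.support_smul hb)

noncomputable def etaEquiv (K : ASC m) : PairIdx K ≃ DSIdx K where
  toFun b := ⟨(b.1.2, b.1.1 \ b.1.2), ⟨b.2.2, Finset.disjoint_sdiff⟩⟩
  invFun b := ⟨(b.1.1 ∪ b.1.2, b.1.1), ⟨Finset.subset_union_left, b.2.1⟩⟩
  left_inv b := by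
    apply Subtype.ext
    apply Prod.ext
    · exact Finset.union_sdiff_of_subset b.2.1
    · rfl
  right_inv b := by
    apply Subtype.ext
    apply Prod.ext
    · rfl
    · exact Finset.union_sdiff_cancel_left b.2.2

lemma lift_single {X M : Type*} [AddCommMonoid M] [Module ℤ M] (f : X → M) (a : X) :
    Finsupp.lift M ℤ X f (Finsupp.single a 1) = f a := by
  simp [Finsupp.lift_apply, Finsupp.sum_single_index]

lemma etaMap_eq (K : ASC m) :
    etaMap K = (Finsupp.domLCongr (etaEquiv K) : PairCochain K ≃ₗ[ℤ] DSCochain K).toLinearMap := by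
  apply Finsupp.lhom_ext'
  intro a
  apply LinearMap.ext_ring
  simp only [LinearMap.comp_apply, Finsupp.lsingle_apply, LinearEquiv.coe_coe,
    Finsupp.domLCongr_single]
  rw [etaMap, lift_single]
  rfl

lemma etaMap_single (K : ASC m) (a : PairIdx K) :
    etaMap K (Finsupp.single a 1) =
      Finsupp.single (⟨(a.1.2, a.1.1 \ a.1.2), ⟨a.2.2, Finset.disjoint_sdiff⟩⟩ : DSIdx K) 1 := by
  rw [etaMap]; exact lift_single _ _

theorem stmt4 (K : ASC m) :
    Function.Bijective (etaMap K) ∧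
    (∀ x : PairCochain K, etaMap K (Paircob K x) = DScob K (etaMap K x)) ∧
    (∀ (p : ℤ) (x : PairCochain K), x ∈ partSub Pairdeg p →
      etaMap K x ∈ partSub DSdeg (p + 1)) := by
  refine ⟨?_, ?_, ?_⟩
  · rw [etaMap_eq]
    exact (Finsupp.domLCongr (etaEquiv K)).bijective
  · suffices h : (etaMap K).comp (Paircob K) = (DScob K).comp (etaMap K) by
      intro x; exact LinearMap.congr_fun h x
    apply Finsupp.lhom_ext'
    intro a
    apply LinearMap.ext_ring
    simp only [LinearMap.comp_apply, Finsupp.lsingle_apply]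
    rw [Paircob, lift_single, map_sum, etaMap_single, DScob]
    erw [lift_single]
    rw [← Finset.sum_attach ((a.1.1 \ a.1.2))]
    refine Finset.sum_congr rfl fun i _ => ?_
    erw [apply_dite (etaMap K)]
    dsimp only
    split_ifs with hc
    · erw [dif_pos hc]
      erw [map_smul, etaMap_single]
      congr 2
      apply Subtype.ext
      apply Prod.ext
      · rfl
      · exact Finset.sdiff_insert a.1.1 a.1.2 i.1
    · erw [dif_neg hc]
      exact map_zero _
  · intro p x hx b hb
    rw [etaMap_eq] at hb
    have hmem : (etaEquiv K).symm b ∈ x.support := by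
      have := Finsupp.mem_support_iff.1 hb
      exact Finsupp.mem_support_iff.2 (by
        simpa [Finsupp.domLCongr_apply, Finsupp.equivMapDomain_apply] using this)
    have hp := hx _ hmem
    have : Pairdeg ((etaEquiv K).symm b) = (b.1.1.card : ℤ) - 1 := rfl
    rw [this] at hp
    show (b.1.1.card : ℤ) = p + 1
    omega
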